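/- (Corollary to Theorem 1.) The density evolution recursion for the regular nonbinary (d_v, d_c, m) LDPC ensemble converges to a fixed point: the sequence defined by x^{(0)} = p(ε) (where p(ε)_i = Σ_{k=i}^m p∘_k(ε)) and x^{(ℓ+1)} = f(g(x^{(ℓ)}); ε) converges, as ℓ → ∞, to a limit x^∞ ∈ ℝ^m satisfying x^∞ = f(g(x^∞); ε). -/

import Mathlib

open scoped BigOperators

noncomputable section

/-- Number of `j`-dimensional subspaces `U` of `𝔽₂^m` whose intersection with `W`
has dimension `k`. -/
def numInter (m j k : ℕ) (W : Submodule (ZMod 2) (Fin m → ZMod 2)) : ℕ :=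
  Set.ncard {U : Submodule (ZMod 2) (Fin m → ZMod 2) |
    Module.finrank (ZMod 2) U = j ∧ Module.finrank (ZMod 2) ↥(U ⊓ W) = k}

/-- Number of `j`-dimensional subspaces `U` of `𝔽₂^m` whose sum with `W`
has dimension `k`. -/
def numSum (m j k : ℕ) (W : Submodule (ZMod 2) (Fin m → ZMod 2)) : ℕ :=
  Set.ncard {U : Submodule (ZMod 2) (Fin m → ZMod 2) |
    Module.finrank (ZMod 2) U = j ∧ Module.finrank (ZMod 2) ↥(U ⊔ W) = k}

/-- Number of `j`-dimensional subspaces of `𝔽₂^m`. -/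
def numDim (m j : ℕ) : ℕ :=
  Set.ncard {U : Submodule (ZMod 2) (Fin m → ZMod 2) | Module.finrank (ZMod 2) U = j}

/-- A canonical `i`-dimensional subspace of `𝔽₂^m` (for `i ≤ m`): vectors supported on
the first `i` coordinates. -/
def stdW (m i : ℕ) : Submodule (ZMod 2) (Fin m → ZMod 2) :=
  Submodule.span (ZMod 2) {x | ∀ t : Fin m, i ≤ (t : ℕ) → x t = 0}

/-- `V^m_{i,j,k}`: probability that a uniformly random `j`-dimensional subspace `U`
of `𝔽₂^m` satisfies `dim (U ⊓ W) = k`, for a fixed `i`-dimensional subspace `W`. -/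
def Vprob (m i j k : ℕ) : ℝ := (numInter m j k (stdW m i) : ℝ) / (numDim m j : ℝ)

/-- `C^m_{i,j,k}`: probability that a uniformly random `j`-dimensional subspace `U`
of `𝔽₂^m` satisfies `dim (U ⊔ W) = k`, for a fixed `i`-dimensional subspace `W`. -/
def Cprob (m i j k : ℕ) : ℝ := (numSum m j k (stdW m i) : ℝ) / (numDim m j : ℝ)

/-- The operation `⊡`. -/
def boxdot (m : ℕ) (a b : Fin (m+1) → ℝ) : Fin (m+1) → ℝ :=
  fun k => ∑ i : Fin (m+1), ∑ j : Fin (m+1), Vprob m i j k * a i * b j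

/-- The operation `⊠`. -/
def boxtimes (m : ℕ) (a b : Fin (m+1) → ℝ) : Fin (m+1) → ℝ :=
  fun k => ∑ i : Fin (m+1), ∑ j : Fin (m+1), Cprob m i j k * a i * b j

/-- `boxdotPow m n a = ⊡^{n+1} a` (the `(n+1)`-fold `⊡`-product of `a` with itself). -/
def boxdotPow (m : ℕ) : ℕ → (Fin (m+1) → ℝ) → (Fin (m+1) → ℝ)
  | 0, a => a
  | n+1, a => boxdot m a (boxdotPow m n a)

/-- `boxtimesPow m n a = ⊠^{n+1} a` (the `(n+1)`-fold `⊠`-product of `a` with itself). -/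
def boxtimesPow (m : ℕ) : ℕ → (Fin (m+1) → ℝ) → (Fin (m+1) → ℝ)
  | 0, a => a
  | n+1, a => boxtimes m a (boxtimesPow m n a)

/-- `p∘(ε)`. -/
def pcirc (m : ℕ) (ε : ℝ) : Fin (m+1) → ℝ :=
  fun i => (m.choose i : ℝ) * ε ^ (i : ℕ) * (1 - ε) ^ (m - (i : ℕ))

/-- `f∘(y∘; ε) = p∘(ε) ⊡ (⊡^{d_v − 1} y∘)`. -/
def fcirc (m dv : ℕ) (ε : ℝ) (y : Fin (m+1) → ℝ) : Fin (m+1) → ℝ :=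
  boxdot m (pcirc m ε) (boxdotPow m (dv - 2) y)

/-- `g∘(x∘) = ⊠^{d_c − 1} x∘`. -/
def gcirc (m dc : ℕ) (x : Fin (m+1) → ℝ) : Fin (m+1) → ℝ :=
  boxtimesPow m (dc - 2) x

/-- Extension of `x ∈ ℝ^m` (indexed `1,…,m`) to `ℕ` with conventions `x_0 = 1`,
`x_i = 0` for `i > m`. -/
def extSeq (m : ℕ) (x : Fin m → ℝ) : ℕ → ℝ :=
  fun i => if _h0 : i = 0 then 1 else if h : i ≤ m then x ⟨i - 1, by omega⟩ else 0

/-- `x̃ ∈ ℝ^{m+1}` with `x̃_i = x_i − x_{i+1}`. -/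
def tilde (m : ℕ) (x : Fin m → ℝ) : Fin (m+1) → ℝ :=
  fun i => extSeq m x i - extSeq m x ((i : ℕ) + 1)

/-- `f(y; ε)_i = Σ_{k=i}^m f∘(ỹ; ε)_k` (here `i : Fin m` denotes the index `i+1 ∈ {1,…,m}`). -/
def fFun (m dv : ℕ) (ε : ℝ) (y : Fin m → ℝ) : Fin m → ℝ :=
  fun i => ∑ k : Fin (m+1), if (i : ℕ) + 1 ≤ (k : ℕ) then fcirc m dv ε (tilde m y) k else 0

/-- `g(x)_i = Σ_{k=i}^m g∘(x̃)_k`. -/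
def gFun (m dc : ℕ) (x : Fin m → ℝ) : Fin m → ℝ :=
  fun i => ∑ k : Fin (m+1), if (i : ℕ) + 1 ≤ (k : ℕ) then gcirc m dc (tilde m x) k else 0

/-- `p(ε)_i = Σ_{k=i}^m p∘_k(ε)`. -/
def pFun (m : ℕ) (ε : ℝ) : Fin m → ℝ :=
  fun i => ∑ k : Fin (m+1), if (i : ℕ) + 1 ≤ (k : ℕ) then pcirc m ε k else 0

/-- `X_ε = {x ∈ ℝ^m : 0 ≤ x_i ≤ p(ε)_i}`. -/
def Xset (m : ℕ) (ε : ℝ) : Set (Fin m → ℝ) := {x | ∀ i, 0 ≤ x i ∧ x i ≤ pFun m ε i}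

/-- `Y = [0,1]^m`. -/
def Yset (m : ℕ) : Set (Fin m → ℝ) := {y | ∀ i, 0 ≤ y i ∧ y i ≤ 1}

/-- The continuous linear map `v ↦ Σ_s c_s v_s`, i.e. the row vector `c` viewed as a
linear functional; used to express gradients. -/
def rowDeriv (m : ℕ) (c : Fin m → ℝ) : (Fin m → ℝ) →L[ℝ] ℝ :=
  ∑ s : Fin m, c s • (ContinuousLinearMap.proj s : (Fin m → ℝ) →L[ℝ] ℝ)

/-- The potential function `U(x; ε) = g(x) D xᵀ − G(x) − F(g(x); ε)` (with `ε` fixed,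
absorbed into `F`). -/
def Upot (m dc : ℕ) (D : Matrix (Fin m) (Fin m) ℝ) (F G : (Fin m → ℝ) → ℝ)
    (x : Fin m → ℝ) : ℝ :=
  (∑ a : Fin m, ∑ b : Fin m, gFun m dc x a * D a b * x b) - G x - F (gFun m dc x)

-- ===== auxiliary lemmas =====

open Module Finset

abbrev Vm (m : ℕ) := Fin m → ZMod 2
abbrev Subm (m : ℕ) := Submodule (ZMod 2) (Vm m)

noncomputable instance (m : ℕ) : Fintype (Subm m) := Fintype.ofFinite _

open Classical in
lemma ncard_setOf_eq (m : ℕ) (p : Subm m → Prop) :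
    {U | p U}.ncard = (Finset.univ.filter p).card := by
  classical
  rw [Set.ncard_eq_toFinset_card', Set.toFinset_setOf]

lemma finrank_Vm (m : ℕ) : finrank (ZMod 2) (Vm m) = m := by
  simp [finrank_pi]

lemma finrank_sub_le (m : ℕ) (U : Subm m) : finrank (ZMod 2) U ≤ m := by
  simpa [finrank_Vm] using Submodule.finrank_le U

-- the restriction map to high coordinates
def restr (m i : ℕ) : Vm m →ₗ[ZMod 2] ({t : Fin m // i ≤ (t : ℕ)} → ZMod 2) :=
  LinearMap.pi (fun t => LinearMap.proj (t : Fin m))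

lemma stdW_eq_ker (m i : ℕ) : stdW m i = LinearMap.ker (restr m i) := by
  apply le_antisymm
  · rw [stdW, Submodule.span_le]
    intro x hx
    simp only [SetLike.mem_coe, LinearMap.mem_ker, restr]
    ext t
    exact hx t.1 t.2
  · intro x hx
    apply Submodule.subset_span
    intro t ht
    have := congrFun hx ⟨t, ht⟩
    simpa [restr] using this

lemma card_high (m i : ℕ) (h : i ≤ m) :
    Fintype.card {t : Fin m // i ≤ (t : ℕ)} = m - i := by
  have e : {t : Fin m // i ≤ (t : ℕ)} ≃ Fin (m - i) :=
    { toFun := fun t => ⟨(t.1 : ℕ) - i, by have := t.1.isLt; have := t.2; omega⟩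
      invFun := fun s => ⟨⟨(s : ℕ) + i, by have := s.isLt; omega⟩, by simp⟩
      left_inv := by
        intro t
        ext
        have := t.2
        simp only []
        omega
      right_inv := by
        intro s
        ext
        simp only []
        omega }
  rw [Fintype.card_congr e, Fintype.card_fin]

lemma restr_surjective (m i : ℕ) : Function.Surjective (restr m i) := by
  intro y
  refine ⟨fun t => if h : i ≤ (t : ℕ) then y ⟨t, h⟩ else 0, ?_⟩
  ext t
  simp [restr, t.2]

lemma finrank_stdW (m i : ℕ) (h : i ≤ m) : finrank (ZMod 2) (stdW m i) = i := by
  have h1 := LinearMap.finrank_range_add_finrank_ker (restr m i)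
  rw [LinearMap.range_eq_top.mpr (restr_surjective m i), finrank_top] at h1
  rw [stdW_eq_ker]
  rw [finrank_Vm, finrank_pi, card_high m i h] at h1
  exact Nat.add_left_cancel (h1.trans (by omega : m = (m - i) + i))

lemma stdW_mono (m : ℕ) {i i' : ℕ} (h : i ≤ i') : stdW m i ≤ stdW m i' := by
  apply Submodule.span_mono
  intro x hx t ht
  exact hx t (le_trans h ht)

noncomputable section
namespace DEaux
open Module Finset
variable {m : ℕ}

lemma sum_count (j : ℕ) (F : Subm m → ℕ) (hF : ∀ U, F U ≤ m) :
    ∑ k : Fin (m+1), Set.ncard {U : Subm m | finrank (ZMod 2) U = j ∧ F U = (k:ℕ)}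
      = Set.ncard {U : Subm m | finrank (ZMod 2) U = j} := by
  classical
  rw [ncard_setOf_eq]
  simp only [ncard_setOf_eq]
  rw [Finset.card_eq_sum_card_fiberwise
    (f := fun U => (⟨F U, by have := hF U; omega⟩ : Fin (m+1))) (t := univ)
    (fun _ _ => mem_univ _)]
  apply Finset.sum_congr rfl
  intro k _
  rw [Finset.filter_filter]
  refine congrArg Finset.card ?_
  ext U
  simp only [Finset.mem_filter, Finset.mem_univ, true_and, Fin.ext_iff]

lemma sum_count_tail (j t : ℕ) (F : Subm m → ℕ) (hF : ∀ U, F U ≤ m) :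
    ∑ k : Fin (m+1), (if t ≤ (k:ℕ) then
        Set.ncard {U : Subm m | finrank (ZMod 2) U = j ∧ F U = (k:ℕ)} else 0)
      = Set.ncard {U : Subm m | finrank (ZMod 2) U = j ∧ t ≤ F U} := by
  classical
  rw [ncard_setOf_eq]
  simp only [ncard_setOf_eq]
  rw [Finset.card_eq_sum_card_fiberwise
    (f := fun U => (⟨F U, by have := hF U; omega⟩ : Fin (m+1))) (t := univ)
    (fun _ _ => mem_univ _)]
  apply Finset.sum_congr rfl
  intro k _
  rw [Finset.filter_filter]
  by_cases hk : t ≤ (k : ℕ)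
  · rw [if_pos hk]
    refine congrArg Finset.card ?_
    ext U
    simp only [Finset.mem_filter, Finset.mem_univ, true_and, Fin.ext_iff]
    constructor
    · rintro ⟨h1, h2⟩; exact ⟨⟨h1, by omega⟩, by omega⟩
    · rintro ⟨⟨h1, h2⟩, h3⟩; exact ⟨h1, by omega⟩
  · rw [if_neg hk]
    symm
    rw [Finset.card_eq_zero]
    apply Finset.eq_empty_iff_forall_notMem.mpr
    intro U hU
    simp only [Finset.mem_filter, Finset.mem_univ, true_and, Fin.ext_iff] at hU
    omega

lemma map_map_symm (σ : Vm m ≃ₗ[ZMod 2] Vm m) (W : Subm m) :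
    Submodule.map (σ : Vm m →ₗ[ZMod 2] Vm m)
      (Submodule.map (σ.symm : Vm m →ₗ[ZMod 2] Vm m) W) = W := by
  ext x
  simp only [Submodule.mem_map]
  constructor
  · rintro ⟨y, ⟨z, hz, rfl⟩, rfl⟩
    simpa using hz
  · intro hx
    exact ⟨σ.symm x, ⟨x, hx, rfl⟩, by simp⟩

lemma count_congr_of_autom (j k : ℕ) (F G : Subm m → ℕ) (σ : Vm m ≃ₗ[ZMod 2] Vm m)
    (hFG : ∀ U, G (Submodule.map (σ : Vm m →ₗ[ZMod 2] Vm m) U) = F U) :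
    Set.ncard {U : Subm m | finrank (ZMod 2) U = j ∧ F U = k}
      = Set.ncard {U : Subm m | finrank (ZMod 2) U = j ∧ G U = k} := by
  rw [← Set.ncard_image_of_injective {U : Subm m | finrank (ZMod 2) U = j ∧ F U = k}
    (Submodule.map_injective_of_injective
      (f := (σ : Vm m →ₗ[ZMod 2] Vm m)) σ.injective)]
  congr 1
  ext W
  simp only [Set.mem_image, Set.mem_setOf_eq]
  constructor
  · rintro ⟨U, ⟨h1, h2⟩, rfl⟩
    refine ⟨by rw [LinearEquiv.finrank_map_eq]; exact h1, by rw [hFG]; exact h2⟩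
  · rintro ⟨h1, h2⟩
    refine ⟨Submodule.map (σ.symm : Vm m →ₗ[ZMod 2] Vm m) W, ⟨?_, ?_⟩, map_map_symm σ W⟩
    · rw [LinearEquiv.finrank_map_eq]; exact h1
    · rw [← hFG, map_map_symm]; exact h2

lemma exists_autom (V W : Subm m) (h : finrank (ZMod 2) V = finrank (ZMod 2) W) :
    ∃ σ : Vm m ≃ₗ[ZMod 2] Vm m, Submodule.map (σ : Vm m →ₗ[ZMod 2] Vm m) V = W := by
  obtain ⟨V', hV'⟩ := Submodule.exists_isCompl V
  obtain ⟨W', hW'⟩ := Submodule.exists_isCompl W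
  have hf : finrank (ZMod 2) V' = finrank (ZMod 2) W' := by
    have h1 := Submodule.finrank_add_eq_of_isCompl hV'
    have h2 := Submodule.finrank_add_eq_of_isCompl hW'
    omega
  let e : V ≃ₗ[ZMod 2] W := LinearEquiv.ofFinrankEq _ _ h
  let e' : V' ≃ₗ[ZMod 2] W' := LinearEquiv.ofFinrankEq _ _ hf
  let σ : Vm m ≃ₗ[ZMod 2] Vm m :=
    (Submodule.prodEquivOfIsCompl V V' hV').symm.trans
      ((e.prodCongr e').trans (Submodule.prodEquivOfIsCompl W W' hW'))
  refine ⟨σ, ?_⟩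
  apply Submodule.eq_of_le_of_finrank_eq
  · rintro x hx
    rw [Submodule.mem_map] at hx
    obtain ⟨v, hv, rfl⟩ := hx
    set p := (Submodule.prodEquivOfIsCompl V V' hV').symm v with hp
    have hv2 : (p.1 : Vm m) + (p.2 : Vm m) = v := by
      have := Submodule.coe_prodEquivOfIsCompl' V V' hV' p
      rw [hp, LinearEquiv.apply_symm_apply] at this
      exact this.symm
    have h2 : (p.2 : Vm m) ∈ V ⊓ V' := by
      constructor
      · have : (p.2 : Vm m) = v - (p.1 : Vm m) := by rw [← hv2]; abel
        rw [this]
        exact Submodule.sub_mem V hv p.1.2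
      · exact p.2.2
    rw [hV'.inf_eq_bot, Submodule.mem_bot] at h2
    have h2' : p.2 = 0 := Subtype.ext h2
    have hσ : σ v = (e p.1 : Vm m) + (e' p.2 : Vm m) := by
      simp only [σ, LinearEquiv.trans_apply, ← hp, LinearEquiv.prodCongr_apply,
        Submodule.coe_prodEquivOfIsCompl']
    simp only [LinearEquiv.coe_coe]
    rw [hσ, h2', map_zero]
    simp only [ZeroMemClass.coe_zero, add_zero]
    exact (e p.1).2
  · rw [LinearEquiv.finrank_map_eq]; exact h

end DEaux
end
noncomputable section
namespace DEaux
open Module Finset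
variable {m : ℕ}

def cntR (R : Subm m → Subm m → ℕ) (j k : ℕ) (W : Subm m) : ℕ :=
  Set.ncard {U : Subm m | finrank (ZMod 2) U = j ∧ R U W = k}

def AutInv (R : Subm m → Subm m → ℕ) : Prop :=
  ∀ (σ : Vm m ≃ₗ[ZMod 2] Vm m) (U V : Subm m),
    R (Submodule.map (σ : Vm m →ₗ[ZMod 2] Vm m) U)
      (Submodule.map (σ : Vm m →ₗ[ZMod 2] Vm m) V) = R U V

lemma cntR_congr (R : Subm m → Subm m → ℕ) (hR : AutInv R) {V W : Subm m}
    (h : finrank (ZMod 2) V = finrank (ZMod 2) W) (j k : ℕ) :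
    cntR R j k V = cntR R j k W := by
  obtain ⟨σ, hσ⟩ := exists_autom V W h
  exact count_congr_of_autom j k (fun U => R U V) (fun U => R U W) σ
    (fun U => by rw [← hσ]; exact hR σ U V)

lemma pair_fiber (R : Subm m → Subm m → ℕ) (hR : AutInv R) (i j k : ℕ) (hi : i ≤ m) :
    ((Finset.univ : Finset (Subm m × Subm m)).filter
       (fun p => finrank (ZMod 2) p.1 = j ∧ finrank (ZMod 2) p.2 = i ∧ R p.1 p.2 = k)).card
      = numDim m i * cntR R j k (stdW m i) := by
  classical
  rw [Finset.card_eq_sum_card_fiberwise (f := Prod.snd) (t := univ) (fun _ _ => mem_univ _)]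
  have step1 : ∀ V : Subm m,
      ((Finset.univ.filter
        (fun p : Subm m × Subm m =>
          finrank (ZMod 2) p.1 = j ∧ finrank (ZMod 2) p.2 = i ∧ R p.1 p.2 = k)).filter
            (fun p => p.2 = V)).card
        = if finrank (ZMod 2) V = i then cntR R j k (stdW m i) else 0 := by
    intro V
    by_cases hV : finrank (ZMod 2) V = i
    · rw [if_pos hV, ← cntR_congr R hR (by rw [hV, finrank_stdW m i hi]) j k,
        cntR, ncard_setOf_eq]
      refine Finset.card_bij' (fun p _ => p.1) (fun U _ => (U, V)) ?_ ?_ ?_ ?_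
      · intro p hp
        simp only [Finset.mem_filter, Finset.mem_univ, true_and] at hp ⊢
        obtain ⟨⟨h1, _, h3⟩, h4⟩ := hp
        exact ⟨h1, h4 ▸ h3⟩
      · intro U hU
        simp only [Finset.mem_filter, Finset.mem_univ, true_and] at hU ⊢
        exact ⟨⟨hU.1, hV, hU.2⟩, trivial⟩
      · intro p hp
        simp only [Finset.mem_filter, Finset.mem_univ, true_and] at hp
        exact Prod.ext rfl hp.2.symm
      · intro U _
        rfl
    · rw [if_neg hV, Finset.card_eq_zero]
      apply Finset.eq_empty_iff_forall_notMem.mpr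
      intro p hp
      simp only [Finset.mem_filter, Finset.mem_univ, true_and] at hp
      exact hV (hp.2 ▸ hp.1.2.1)
  calc ∑ V : Subm m, ((Finset.univ.filter
        (fun p : Subm m × Subm m =>
          finrank (ZMod 2) p.1 = j ∧ finrank (ZMod 2) p.2 = i ∧ R p.1 p.2 = k)).filter
            (fun p => p.2 = V)).card
      = ∑ V : Subm m, (if finrank (ZMod 2) V = i then cntR R j k (stdW m i) else 0) := by
        exact Finset.sum_congr rfl (fun V _ => step1 V)
    _ = (Finset.univ.filter (fun V : Subm m => finrank (ZMod 2) V = i)).card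
          * cntR R j k (stdW m i) := by
        rw [← Finset.sum_filter, Finset.sum_const, smul_eq_mul]
    _ = numDim m i * cntR R j k (stdW m i) := by
        refine congrArg (· * cntR R j k (stdW m i)) ?_
        rw [numDim, ncard_setOf_eq]
        refine congrArg Finset.card ?_
        ext V
        simp

lemma pair_swap (R : Subm m → Subm m → ℕ) (hsym : ∀ U V, R U V = R V U) (i j k : ℕ) :
    ((Finset.univ : Finset (Subm m × Subm m)).filter
       (fun p => finrank (ZMod 2) p.1 = j ∧ finrank (ZMod 2) p.2 = i ∧ R p.1 p.2 = k)).card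
    = ((Finset.univ : Finset (Subm m × Subm m)).filter
       (fun p => finrank (ZMod 2) p.1 = i ∧ finrank (ZMod 2) p.2 = j ∧ R p.1 p.2 = k)).card := by
  classical
  refine Finset.card_bij' (fun p _ => p.swap) (fun p _ => p.swap) ?_ ?_ ?_ ?_
  · intro p hp
    simp only [Finset.mem_filter, Finset.mem_univ, true_and, Prod.fst_swap, Prod.snd_swap] at hp ⊢
    exact ⟨hp.2.1, hp.1, by rw [hsym]; exact hp.2.2⟩
  · intro p hp
    simp only [Finset.mem_filter, Finset.mem_univ, true_and, Prod.fst_swap, Prod.snd_swap] at hp ⊢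
    exact ⟨hp.2.1, hp.1, by rw [hsym]; exact hp.2.2⟩
  · intro p _
    exact Prod.swap_swap p
  · intro p _
    exact Prod.swap_swap p

lemma cntR_sym (R : Subm m → Subm m → ℕ) (hR : AutInv R) (hsym : ∀ U V, R U V = R V U)
    {i j : ℕ} (hi : i ≤ m) (hj : j ≤ m) (k : ℕ) :
    numDim m i * cntR R j k (stdW m i) = numDim m j * cntR R i k (stdW m j) := by
  rw [← pair_fiber R hR i j k hi, ← pair_fiber R hR j i k hj]
  exact pair_swap R hsym i j k

end DEaux
end
noncomputable section
namespace DEaux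
open Module Finset
variable {m : ℕ}

lemma autInv_inf : AutInv (fun U V : Subm m => finrank (ZMod 2) ↥(U ⊓ V)) := by
  intro σ U V
  show finrank (ZMod 2) ↥(Submodule.map (σ : Vm m →ₗ[ZMod 2] Vm m) U
      ⊓ Submodule.map (σ : Vm m →ₗ[ZMod 2] Vm m) V) = finrank (ZMod 2) ↥(U ⊓ V)
  rw [← Submodule.map_inf (f := (σ : Vm m →ₗ[ZMod 2] Vm m)) σ.injective,
    LinearEquiv.finrank_map_eq]

lemma autInv_sup : AutInv (fun U V : Subm m => finrank (ZMod 2) ↥(U ⊔ V)) := by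
  intro σ U V
  show finrank (ZMod 2) ↥(Submodule.map (σ : Vm m →ₗ[ZMod 2] Vm m) U
      ⊔ Submodule.map (σ : Vm m →ₗ[ZMod 2] Vm m) V) = finrank (ZMod 2) ↥(U ⊔ V)
  rw [← Submodule.map_sup (f := (σ : Vm m →ₗ[ZMod 2] Vm m)),
    LinearEquiv.finrank_map_eq]

lemma numDim_pos (j : ℕ) (hj : j ≤ m) : 0 < numDim m j := by
  rw [numDim, Set.ncard_pos (Set.toFinite _)]
  exact ⟨stdW m j, finrank_stdW m j hj⟩

lemma sum_numInter (j : ℕ) (W : Subm m) :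
    ∑ k : Fin (m+1), numInter m j k W = numDim m j :=
  sum_count j (fun U => finrank (ZMod 2) ↥(U ⊓ W)) (fun _ => finrank_sub_le m _)

lemma sum_numSum (j : ℕ) (W : Subm m) :
    ∑ k : Fin (m+1), numSum m j k W = numDim m j :=
  sum_count j (fun U => finrank (ZMod 2) ↥(U ⊔ W)) (fun _ => finrank_sub_le m _)

lemma tail_numInter (j t : ℕ) (W : Subm m) :
    ∑ k : Fin (m+1), (if t ≤ (k:ℕ) then numInter m j k W else 0)
      = Set.ncard {U : Subm m | finrank (ZMod 2) U = j ∧ t ≤ finrank (ZMod 2) ↥(U ⊓ W)} :=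
  sum_count_tail j t (fun U => finrank (ZMod 2) ↥(U ⊓ W)) (fun _ => finrank_sub_le m _)

lemma tail_numSum (j t : ℕ) (W : Subm m) :
    ∑ k : Fin (m+1), (if t ≤ (k:ℕ) then numSum m j k W else 0)
      = Set.ncard {U : Subm m | finrank (ZMod 2) U = j ∧ t ≤ finrank (ZMod 2) ↥(U ⊔ W)} :=
  sum_count_tail j t (fun U => finrank (ZMod 2) ↥(U ⊔ W)) (fun _ => finrank_sub_le m _)

lemma tail_numInter_mono (j t : ℕ) {W W' : Subm m} (h : W ≤ W') :
    ∑ k : Fin (m+1), (if t ≤ (k:ℕ) then numInter m j k W else 0)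
      ≤ ∑ k : Fin (m+1), (if t ≤ (k:ℕ) then numInter m j k W' else 0) := by
  rw [tail_numInter, tail_numInter]
  apply Set.ncard_le_ncard _ (Set.toFinite _)
  rintro U ⟨h1, h2⟩
  exact ⟨h1, le_trans h2 (Submodule.finrank_mono (inf_le_inf_left U h))⟩

lemma tail_numSum_mono (j t : ℕ) {W W' : Subm m} (h : W ≤ W') :
    ∑ k : Fin (m+1), (if t ≤ (k:ℕ) then numSum m j k W else 0)
      ≤ ∑ k : Fin (m+1), (if t ≤ (k:ℕ) then numSum m j k W' else 0) := by
  rw [tail_numSum, tail_numSum]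
  apply Set.ncard_le_ncard _ (Set.toFinite _)
  rintro U ⟨h1, h2⟩
  exact ⟨h1, le_trans h2 (Submodule.finrank_mono (sup_le_sup_left h U))⟩

lemma numInter_eq_zero (j k : ℕ) (W : Subm m) (h : finrank (ZMod 2) W < k) :
    numInter m j k W = 0 := by
  rw [numInter]
  convert Set.ncard_empty (Subm m)
  apply Set.eq_empty_iff_forall_notMem.mpr
  rintro U ⟨_, h2⟩
  have : finrank (ZMod 2) ↥(U ⊓ W) ≤ finrank (ZMod 2) W :=
    Submodule.finrank_mono inf_le_right
  omega

lemma numInter_sym {i j : ℕ} (hi : i ≤ m) (hj : j ≤ m) (k : ℕ) :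
    numDim m i * numInter m j k (stdW m i) = numDim m j * numInter m i k (stdW m j) :=
  cntR_sym (fun U V : Subm m => finrank (ZMod 2) ↥(U ⊓ V)) autInv_inf
    (fun U V => congrArg (fun s : Subm m => finrank (ZMod 2) ↥s) (inf_comm U V)) hi hj k

lemma numSum_sym {i j : ℕ} (hi : i ≤ m) (hj : j ≤ m) (k : ℕ) :
    numDim m i * numSum m j k (stdW m i) = numDim m j * numSum m i k (stdW m j) :=
  cntR_sym (fun U V : Subm m => finrank (ZMod 2) ↥(U ⊔ V)) autInv_sup
    (fun U V => congrArg (fun s : Subm m => finrank (ZMod 2) ↥s) (sup_comm U V)) hi hj k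

-- real-level
lemma Vprob_nonneg (i j k : ℕ) : 0 ≤ Vprob m i j k :=
  div_nonneg (Nat.cast_nonneg _) (Nat.cast_nonneg _)

lemma Cprob_nonneg (i j k : ℕ) : 0 ≤ Cprob m i j k :=
  div_nonneg (Nat.cast_nonneg _) (Nat.cast_nonneg _)

lemma numDim_ne_zero_real (j : ℕ) (hj : j ≤ m) : (numDim m j : ℝ) ≠ 0 :=
  Nat.cast_ne_zero.mpr (numDim_pos j hj).ne' 

lemma sum_Vprob (i j : ℕ) (hj : j ≤ m) : ∑ k : Fin (m+1), Vprob m i j k = 1 := by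
  unfold Vprob
  rw [← Finset.sum_div]
  rw [div_eq_one_iff_eq (numDim_ne_zero_real j hj)]
  exact_mod_cast congrArg (Nat.cast (R := ℝ)) (sum_numInter j (stdW m i))

lemma sum_Cprob (i j : ℕ) (hj : j ≤ m) : ∑ k : Fin (m+1), Cprob m i j k = 1 := by
  unfold Cprob
  rw [← Finset.sum_div]
  rw [div_eq_one_iff_eq (numDim_ne_zero_real j hj)]
  exact_mod_cast congrArg (Nat.cast (R := ℝ)) (sum_numSum j (stdW m i))

lemma Vprob_sym {i j : ℕ} (hi : i ≤ m) (hj : j ≤ m) (k : ℕ) :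
    Vprob m i j k = Vprob m j i k := by
  unfold Vprob
  rw [div_eq_div_iff (numDim_ne_zero_real j hj) (numDim_ne_zero_real i hi)]
  have h := numInter_sym hi hj k
  have : ((numDim m i * numInter m j k (stdW m i) : ℕ) : ℝ)
      = ((numDim m j * numInter m i k (stdW m j) : ℕ) : ℝ) := by exact_mod_cast h
  push_cast at this
  linarith

lemma Cprob_sym {i j : ℕ} (hi : i ≤ m) (hj : j ≤ m) (k : ℕ) :
    Cprob m i j k = Cprob m j i k := by
  unfold Cprob
  rw [div_eq_div_iff (numDim_ne_zero_real j hj) (numDim_ne_zero_real i hi)]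
  have h := numSum_sym hi hj k
  have : ((numDim m i * numSum m j k (stdW m i) : ℕ) : ℝ)
      = ((numDim m j * numSum m i k (stdW m j) : ℕ) : ℝ) := by exact_mod_cast h
  push_cast at this
  linarith

lemma Vprob_eq_zero {i k : ℕ} (hi : i ≤ m) (j : ℕ) (h : i < k) : Vprob m i j k = 0 := by
  unfold Vprob
  rw [numInter_eq_zero j k (stdW m i) (by rw [finrank_stdW m i hi]; exact h)]
  simp

lemma tail_cast_div (t j : ℕ) (hj : j ≤ m) (f : Fin (m+1) → ℕ) :
    ∑ k : Fin (m+1), (if t ≤ (k:ℕ) then ((f k : ℝ) / (numDim m j : ℝ)) else 0)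
      = ((∑ k : Fin (m+1), if t ≤ (k:ℕ) then f k else 0 : ℕ) : ℝ) / (numDim m j : ℝ) := by
  have h1 : ∀ k : Fin (m+1), (if t ≤ (k:ℕ) then ((f k : ℝ) / (numDim m j : ℝ)) else 0)
      = ((if t ≤ (k:ℕ) then f k else 0 : ℕ) : ℝ) / (numDim m j : ℝ) := by
    intro k; split <;> simp
  rw [Finset.sum_congr rfl (fun k _ => h1 k), ← Finset.sum_div, Nat.cast_sum]

lemma tail_Vprob_mono_left (j t : ℕ) {i i' : ℕ} (hii : i ≤ i') (hj : j ≤ m) :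
    ∑ k : Fin (m+1), (if t ≤ (k:ℕ) then Vprob m i j k else 0)
      ≤ ∑ k : Fin (m+1), (if t ≤ (k:ℕ) then Vprob m i' j k else 0) := by
  unfold Vprob
  have hd : (0:ℝ) < (numDim m j : ℝ) := by exact_mod_cast numDim_pos j hj
  rw [tail_cast_div t j hj, tail_cast_div t j hj]
  apply div_le_div_of_nonneg_right ?_ hd.le
  exact_mod_cast tail_numInter_mono j t (stdW_mono m hii)

lemma tail_Cprob_mono_left (j t : ℕ) {i i' : ℕ} (hii : i ≤ i') (hj : j ≤ m) :
    ∑ k : Fin (m+1), (if t ≤ (k:ℕ) then Cprob m i j k else 0)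
      ≤ ∑ k : Fin (m+1), (if t ≤ (k:ℕ) then Cprob m i' j k else 0) := by
  unfold Cprob
  have hd : (0:ℝ) < (numDim m j : ℝ) := by exact_mod_cast numDim_pos j hj
  rw [tail_cast_div t j hj, tail_cast_div t j hj]
  apply div_le_div_of_nonneg_right ?_ hd.le
  exact_mod_cast tail_numSum_mono j t (stdW_mono m hii)

end DEaux
end



noncomputable section
namespace DEaux
open Module Finset
variable {m : ℕ}

/-- tail sum from `t`. -/
def tail (m : ℕ) (a : Fin (m+1) → ℝ) (t : ℕ) : ℝ :=
  ∑ k : Fin (m+1), if t ≤ (k:ℕ) then a k else 0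

def IsPV (m : ℕ) (a : Fin (m+1) → ℝ) : Prop :=
  (∀ k, 0 ≤ a k) ∧ ∑ k, a k = 1

def stLE (m : ℕ) (a b : Fin (m+1) → ℝ) : Prop := ∀ t : ℕ, tail m a t ≤ tail m b t

lemma tail_zero (a : Fin (m+1) → ℝ) : tail m a 0 = ∑ k, a k := by
  unfold tail
  exact Finset.sum_congr rfl (fun k _ => if_pos (Nat.zero_le _))

lemma tail_anti (a : Fin (m+1) → ℝ) (ha : ∀ k, 0 ≤ a k) {t t' : ℕ} (h : t ≤ t') :
    tail m a t' ≤ tail m a t := by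
  apply Finset.sum_le_sum
  intro k _
  by_cases h1 : t' ≤ (k:ℕ)
  · rw [if_pos h1, if_pos (le_trans h h1)]
  · rw [if_neg h1]
    split
    · exact ha k
    · exact le_refl 0

lemma tail_nonneg (a : Fin (m+1) → ℝ) (ha : ∀ k, 0 ≤ a k) (t : ℕ) : 0 ≤ tail m a t := by
  apply Finset.sum_nonneg
  intro k _
  split
  · exact ha k
  · exact le_refl 0

lemma tail_le_sum (a : Fin (m+1) → ℝ) (ha : ∀ k, 0 ≤ a k) (t : ℕ) :
    tail m a t ≤ ∑ k, a k := by
  rw [← tail_zero]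
  exact tail_anti a ha (Nat.zero_le t)

lemma tail_eq_zero (a : Fin (m+1) → ℝ) {t : ℕ} (h : m < t) : tail m a t = 0 := by
  apply Finset.sum_eq_zero
  intro k _
  rw [if_neg]
  have := k.is_le
  omega

lemma tail_sub (a : Fin (m+1) → ℝ) (k : Fin (m+1)) :
    a k = tail m a k - tail m a ((k:ℕ)+1) := by
  unfold tail
  rw [← Finset.sum_sub_distrib]
  have h : ∀ k' : Fin (m+1), ((if (k:ℕ) ≤ (k':ℕ) then a k' else 0)
      - (if (k:ℕ)+1 ≤ (k':ℕ) then a k' else 0)) = if k' = k then a k' else 0 := by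
    intro k'
    rcases lt_trichotomy ((k':ℕ)) ((k:ℕ)) with h1 | h1 | h1
    · rw [if_neg (by omega), if_neg (by omega), if_neg (by intro h2; rw [h2] at h1; omega), sub_zero]
    · rw [if_pos (by omega), if_neg (by omega), if_pos (Fin.ext h1), sub_zero]
    · rw [if_pos (by omega), if_pos (by omega), if_neg (by intro h2; rw [h2] at h1; omega), sub_self]
  rw [Finset.sum_congr rfl (fun k' _ => h k'), Finset.sum_ite_eq' Finset.univ k a]
  simp

lemma eq_of_tail_eq (a b : Fin (m+1) → ℝ) (h : ∀ t, tail m a t = tail m b t) : a = b := by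
  funext k
  rw [tail_sub a k, tail_sub b k, h, h]

lemma telescope_range (φ : Fin (m+1) → ℝ) (k : Fin (m+1)) :
    ∑ t ∈ Finset.range m, (if t+1 ≤ (k:ℕ) then
        (φ ⟨min (t+1) m, by omega⟩ - φ ⟨min t m, by omega⟩) else 0)
      = φ k - φ ⟨0, by omega⟩ := by
  have hk : (k:ℕ) ≤ m := k.is_le
  rw [← Finset.sum_subset (Finset.range_subset_range.mpr hk)
      (fun t _ ht => by rw [if_neg (by simp only [Finset.mem_range, not_lt] at ht; omega)])]
  have h2 : ∀ t ∈ Finset.range (k:ℕ), (if t+1 ≤ (k:ℕ) then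
      ((fun s => φ ⟨min s m, by omega⟩) (t+1) - (fun s => φ ⟨min s m, by omega⟩) t) else 0)
      = ((fun s => φ ⟨min s m, by omega⟩) (t+1) - (fun s => φ ⟨min s m, by omega⟩) t) := by
    intro t ht
    rw [if_pos (by simp only [Finset.mem_range] at ht; omega)]
  rw [Finset.sum_congr rfl h2, Finset.sum_range_sub (fun s => φ ⟨min s m, by omega⟩) (k:ℕ)]
  have e1 : (⟨min (k:ℕ) m, by omega⟩ : Fin (m+1)) = k := Fin.ext (by simp [min_eq_left hk])
  have e2 : (⟨min 0 m, by omega⟩ : Fin (m+1)) = ⟨0, by omega⟩ := Fin.ext (by simp)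
  rw [e1, e2]

lemma abel_id (a φ : Fin (m+1) → ℝ) :
    ∑ k, a k * φ k
      = φ ⟨0, by omega⟩ * (∑ k, a k)
        + ∑ t ∈ Finset.range m,
            (φ ⟨min (t+1) m, by omega⟩ - φ ⟨min t m, by omega⟩) * tail m a (t+1) := by
  have key : ∀ k : Fin (m+1), a k * φ k
      = a k * φ ⟨0, by omega⟩
        + ∑ t ∈ Finset.range m, (if t+1 ≤ (k:ℕ) then
            (φ ⟨min (t+1) m, by omega⟩ - φ ⟨min t m, by omega⟩) * a k else 0) := by
    intro k
    have := telescope_range φ k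
    have h3 : ∑ t ∈ Finset.range m, (if t+1 ≤ (k:ℕ) then
        (φ ⟨min (t+1) m, by omega⟩ - φ ⟨min t m, by omega⟩) * a k else 0)
        = (∑ t ∈ Finset.range m, (if t+1 ≤ (k:ℕ) then
            (φ ⟨min (t+1) m, by omega⟩ - φ ⟨min t m, by omega⟩) else 0)) * a k := by
      rw [Finset.sum_mul]
      apply Finset.sum_congr rfl
      intro t _
      split
      · rfl
      · rw [zero_mul]
    rw [h3, this]
    ring
  rw [Finset.sum_congr rfl (fun k _ => key k), Finset.sum_add_distrib]
  congr 1
  · rw [← Finset.sum_mul, mul_comm]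
  · rw [Finset.sum_comm]
    apply Finset.sum_congr rfl
    intro t _
    unfold tail
    rw [Finset.mul_sum]
    apply Finset.sum_congr rfl
    intro k _
    split
    · rfl
    · rw [mul_zero]

lemma exp_mono (a b φ : Fin (m+1) → ℝ) (ha : IsPV m a) (hb : IsPV m b)
    (hab : stLE m a b)
    (hφ : ∀ s t : Fin (m+1), (s:ℕ) ≤ (t:ℕ) → φ s ≤ φ t) :
    ∑ k, a k * φ k ≤ ∑ k, b k * φ k := by
  rw [abel_id a φ, abel_id b φ, ha.2, hb.2]
  apply add_le_add le_rfl
  apply Finset.sum_le_sum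
  intro t ht
  simp only [Finset.mem_range] at ht
  have hmono : φ ⟨min t m, by omega⟩ ≤ φ ⟨min (t+1) m, by omega⟩ := by
    apply hφ
    simp only []
    omega
  have := hab (t+1)
  nlinarith [tail_nonneg a ha.1 (t+1), tail_nonneg b hb.1 (t+1)]

end DEaux
end


noncomputable section
namespace DEaux
open Module Finset
variable {m : ℕ}

def opK (m : ℕ) (K : Fin (m+1) → Fin (m+1) → Fin (m+1) → ℝ) (a b : Fin (m+1) → ℝ) :
    Fin (m+1) → ℝ :=
  fun k => ∑ i : Fin (m+1), ∑ j : Fin (m+1), K i j k * a i * b j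

structure KerOK (m : ℕ) (K : Fin (m+1) → Fin (m+1) → Fin (m+1) → ℝ) : Prop where
  nonneg : ∀ i j k, 0 ≤ K i j k
  sum_one : ∀ i j, ∑ k, K i j k = 1
  mono_left : ∀ (i i' j : Fin (m+1)) (t : ℕ), (i:ℕ) ≤ (i':ℕ) →
    tail m (fun k => K i j k) t ≤ tail m (fun k => K i' j k) t
  mono_right : ∀ (i j j' : Fin (m+1)) (t : ℕ), (j:ℕ) ≤ (j':ℕ) →
    tail m (fun k => K i j k) t ≤ tail m (fun k => K i j' k) t

lemma opK_nonneg {K} (hK : KerOK m K) {a b : Fin (m+1) → ℝ}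
    (ha : ∀ i, 0 ≤ a i) (hb : ∀ j, 0 ≤ b j) (k : Fin (m+1)) : 0 ≤ opK m K a b k := by
  apply Finset.sum_nonneg
  intro i _
  apply Finset.sum_nonneg
  intro j _
  exact mul_nonneg (mul_nonneg (hK.nonneg i j k) (ha i)) (hb j)

lemma opK_sum {K} (hK : KerOK m K) (a b : Fin (m+1) → ℝ) :
    ∑ k, opK m K a b k = (∑ i, a i) * (∑ j, b j) := by
  unfold opK
  rw [Finset.sum_comm]
  rw [Finset.sum_mul]
  apply Finset.sum_congr rfl
  intro i _
  rw [Finset.sum_comm, Finset.mul_sum]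
  apply Finset.sum_congr rfl
  intro j _
  rw [← Finset.sum_mul, ← Finset.sum_mul, hK.sum_one i j, one_mul]

lemma opK_PV {K} (hK : KerOK m K) {a b : Fin (m+1) → ℝ}
    (ha : IsPV m a) (hb : IsPV m b) : IsPV m (opK m K a b) :=
  ⟨opK_nonneg hK ha.1 hb.1, by rw [opK_sum hK, ha.2, hb.2, one_mul]⟩

lemma tail_opK {K} (a b : Fin (m+1) → ℝ) (t : ℕ) :
    tail m (opK m K a b) t
      = ∑ i, a i * (∑ j, b j * tail m (fun k => K i j k) t) := by
  unfold tail opK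
  have h1 : ∀ k : Fin (m+1), (if t ≤ (k:ℕ) then ∑ i, ∑ j, K i j k * a i * b j else 0)
      = ∑ i, ∑ j, a i * (b j * (if t ≤ (k:ℕ) then K i j k else 0)) := by
    intro k
    split
    · apply Finset.sum_congr rfl
      intro i _
      apply Finset.sum_congr rfl
      intro j _
      ring
    · symm
      apply Finset.sum_eq_zero
      intro i _
      apply Finset.sum_eq_zero
      intro j _
      rw [mul_zero, mul_zero]
  rw [Finset.sum_congr rfl (fun k _ => h1 k), Finset.sum_comm]
  apply Finset.sum_congr rfl
  intro i _
  rw [Finset.mul_sum, Finset.sum_comm]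
  apply Finset.sum_congr rfl
  intro j _
  simp only [Finset.mul_sum]

lemma opK_mono {K} (hK : KerOK m K) {a a' b b' : Fin (m+1) → ℝ}
    (ha : IsPV m a) (ha' : IsPV m a') (hb : IsPV m b) (hb' : IsPV m b')
    (h1 : stLE m a a') (h2 : stLE m b b') :
    stLE m (opK m K a b) (opK m K a' b') := by
  intro t
  rw [tail_opK, tail_opK]
  have step1 : ∑ i, a i * (∑ j, b j * tail m (fun k => K i j k) t)
      ≤ ∑ i, a' i * (∑ j, b j * tail m (fun k => K i j k) t) := by
    apply exp_mono a a' _ ha ha' h1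
    intro s s' hs
    apply Finset.sum_le_sum
    intro j _
    exact mul_le_mul_of_nonneg_left (hK.mono_left s s' j t hs) (hb.1 j)
  have step2 : ∑ i, a' i * (∑ j, b j * tail m (fun k => K i j k) t)
      ≤ ∑ i, a' i * (∑ j, b' j * tail m (fun k => K i j k) t) := by
    apply Finset.sum_le_sum
    intro i _
    apply mul_le_mul_of_nonneg_left _ (ha'.1 i)
    apply exp_mono b b' _ hb hb' h2
    intro s s' hs
    exact hK.mono_right i s s' t hs
  linarith

lemma kerOK_V : KerOK m (fun i j k : Fin (m+1) => Vprob m i j k) := by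
  constructor
  · intro i j k
    exact Vprob_nonneg _ _ _
  · intro i j
    exact sum_Vprob i j j.is_le
  · intro i i' j t h
    exact tail_Vprob_mono_left j t h j.is_le
  · intro i j j' t h
    have hs : ∀ jj : Fin (m+1), tail m (fun k => Vprob m i jj k) t
        = tail m (fun k => Vprob m jj i k) t := by
      intro jj
      unfold tail
      apply Finset.sum_congr rfl
      intro k _
      have hsy := Vprob_sym (m := m) i.is_le jj.is_le (k : ℕ)
      simp only [hsy]
    rw [hs j, hs j']
    exact tail_Vprob_mono_left i t h i.is_le

lemma kerOK_C : KerOK m (fun i j k : Fin (m+1) => Cprob m i j k) := by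
  constructor
  · intro i j k
    exact Cprob_nonneg _ _ _
  · intro i j
    exact sum_Cprob i j j.is_le
  · intro i i' j t h
    exact tail_Cprob_mono_left j t h j.is_le
  · intro i j j' t h
    have hs : ∀ jj : Fin (m+1), tail m (fun k => Cprob m i jj k) t
        = tail m (fun k => Cprob m jj i k) t := by
      intro jj
      unfold tail
      apply Finset.sum_congr rfl
      intro k _
      have hsy := Cprob_sym (m := m) i.is_le jj.is_le (k : ℕ)
      simp only [hsy]
    rw [hs j, hs j']
    exact tail_Cprob_mono_left i t h i.is_le

lemma boxdot_eq_opK (a b : Fin (m+1) → ℝ) :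
    boxdot m a b = opK m (fun i j k : Fin (m+1) => Vprob m i j k) a b := rfl

lemma boxtimes_eq_opK (a b : Fin (m+1) → ℝ) :
    boxtimes m a b = opK m (fun i j k : Fin (m+1) => Cprob m i j k) a b := rfl

lemma boxdotPow_PV (n : ℕ) {a : Fin (m+1) → ℝ} (ha : IsPV m a) :
    IsPV m (boxdotPow m n a) := by
  induction n with
  | zero => exact ha
  | succ n ih =>
    show IsPV m (boxdot m a (boxdotPow m n a))
    rw [boxdot_eq_opK]
    exact opK_PV kerOK_V ha ih

lemma boxtimesPow_PV (n : ℕ) {a : Fin (m+1) → ℝ} (ha : IsPV m a) :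
    IsPV m (boxtimesPow m n a) := by
  induction n with
  | zero => exact ha
  | succ n ih =>
    show IsPV m (boxtimes m a (boxtimesPow m n a))
    rw [boxtimes_eq_opK]
    exact opK_PV kerOK_C ha ih

lemma boxdotPow_mono (n : ℕ) {a a' : Fin (m+1) → ℝ} (ha : IsPV m a) (ha' : IsPV m a')
    (h : stLE m a a') : stLE m (boxdotPow m n a) (boxdotPow m n a') := by
  induction n with
  | zero => exact h
  | succ n ih =>
    show stLE m (boxdot m a (boxdotPow m n a)) (boxdot m a' (boxdotPow m n a'))
    rw [boxdot_eq_opK, boxdot_eq_opK]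
    exact opK_mono kerOK_V ha ha' (boxdotPow_PV n ha) (boxdotPow_PV n ha') h ih

lemma boxtimesPow_mono (n : ℕ) {a a' : Fin (m+1) → ℝ} (ha : IsPV m a) (ha' : IsPV m a')
    (h : stLE m a a') : stLE m (boxtimesPow m n a) (boxtimesPow m n a') := by
  induction n with
  | zero => exact h
  | succ n ih =>
    show stLE m (boxtimes m a (boxtimesPow m n a)) (boxtimes m a' (boxtimesPow m n a'))
    rw [boxtimes_eq_opK, boxtimes_eq_opK]
    exact opK_mono kerOK_C ha ha' (boxtimesPow_PV n ha) (boxtimesPow_PV n ha') h ih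

lemma stLE_refl (a : Fin (m+1) → ℝ) : stLE m a a := fun _ => le_refl _

lemma tail_boxdot_le {z : Fin (m+1) → ℝ} (hz : IsPV m z)
    {p : Fin (m+1) → ℝ} (hp : IsPV m p) (t : ℕ) :
    tail m (boxdot m p z) t ≤ tail m p t := by
  rw [boxdot_eq_opK, tail_opK]
  have hbd : ∀ i j : Fin (m+1),
      tail m (fun k => Vprob m i j k) t ≤ (if t ≤ (i:ℕ) then 1 else 0) := by
    intro i j
    by_cases hti : t ≤ (i:ℕ)
    · rw [if_pos hti, ← sum_Vprob (i:ℕ) (j:ℕ) j.is_le]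
      exact tail_le_sum _ (fun k => Vprob_nonneg _ _ _) t
    · rw [if_neg hti]
      apply le_of_eq
      apply Finset.sum_eq_zero
      intro k _
      split
      · exact Vprob_eq_zero i.is_le (j:ℕ) (by omega)
      · rfl
  calc ∑ i, p i * (∑ j, z j * tail m (fun k => Vprob m i j k) t)
      ≤ ∑ i, p i * (∑ j, z j * (if t ≤ (i:ℕ) then 1 else 0)) := by
        apply Finset.sum_le_sum
        intro i _
        apply mul_le_mul_of_nonneg_left _ (hp.1 i)
        apply Finset.sum_le_sum
        intro j _
        exact mul_le_mul_of_nonneg_left (hbd i j) (hz.1 j)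
    _ = tail m p t := by
        unfold tail
        apply Finset.sum_congr rfl
        intro i _
        rw [← Finset.sum_mul, hz.2, one_mul]
        split
        · rw [mul_one]
        · rw [mul_zero]

end DEaux
end


noncomputable section
namespace DEaux
open Module Finset
variable {m : ℕ}

def Good (m : ℕ) (x : Fin m → ℝ) : Prop :=
  ∀ t : ℕ, 0 ≤ extSeq m x (t+1) ∧ extSeq m x (t+1) ≤ extSeq m x t

lemma extSeq_zero (x : Fin m → ℝ) : extSeq m x 0 = 1 := by
  unfold extSeq
  rw [dif_pos rfl]

lemma extSeq_coord (x : Fin m → ℝ) (i : Fin m) : extSeq m x ((i:ℕ)+1) = x i := by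
  unfold extSeq
  rw [dif_neg (by omega), dif_pos (by omega)]
  have h1 : (⟨(i:ℕ)+1-1, by omega⟩ : Fin m) = i := Fin.ext (by simp)
  rw [h1]

lemma extSeq_nonneg {x : Fin m → ℝ} (hx : Good m x) (t : ℕ) : 0 ≤ extSeq m x t := by
  cases t with
  | zero => rw [extSeq_zero]; norm_num
  | succ n => exact (hx n).1

lemma extSeq_high (x : Fin m → ℝ) {t : ℕ} (h : m < t) : extSeq m x t = 0 := by
  unfold extSeq
  rw [dif_neg (by omega), dif_neg (by omega)]

lemma tail_tilde (x : Fin m → ℝ) (t : ℕ) : tail m (tilde m x) t = extSeq m x t := by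
  unfold tail tilde
  rw [Fin.sum_univ_eq_sum_range
    (fun k => if t ≤ k then extSeq m x k - extSeq m x (k+1) else 0) (m+1)]
  by_cases ht : t ≤ m+1
  · have hfil : Finset.range (m+1) = Finset.range (m+1) := rfl
    rw [← Finset.sum_filter]
    have : Finset.filter (fun k => t ≤ k) (Finset.range (m+1)) = Finset.Ico t (m+1) := by
      ext k
      simp only [Finset.mem_filter, Finset.mem_range, Finset.mem_Ico]
      omega
    rw [this, Finset.sum_Ico_eq_sub _ ht, Finset.sum_range_sub' (fun k => extSeq m x k),
      Finset.sum_range_sub' (fun k => extSeq m x k)]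
    rw [extSeq_zero, extSeq_high x (by omega)]
    ring
  · rw [extSeq_high x (by omega)]
    apply Finset.sum_eq_zero
    intro k hk
    simp only [Finset.mem_range] at hk
    rw [if_neg (by omega)]

lemma IsPV_tilde {x : Fin m → ℝ} (hx : Good m x) : IsPV m (tilde m x) := by
  constructor
  · intro k
    unfold tilde
    have := (hx (k:ℕ)).2
    linarith
  · rw [← tail_zero, tail_tilde, extSeq_zero]

lemma stLE_tilde {x y : Fin m → ℝ} (h : ∀ i, x i ≤ y i) :
    stLE m (tilde m x) (tilde m y) := by
  intro t
  rw [tail_tilde, tail_tilde]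
  unfold extSeq
  by_cases h0 : t = 0
  · rw [dif_pos h0, dif_pos h0]
  · rw [dif_neg h0, dif_neg h0]
    by_cases hm' : t ≤ m
    · rw [dif_pos hm', dif_pos hm']
      exact h _
    · rw [dif_neg hm', dif_neg hm']

/-- `x ∈ ℝ^m` whose entries are the tails of `c` from `i+1`. -/
def tailsOf (m : ℕ) (c : Fin (m+1) → ℝ) : Fin m → ℝ := fun i => tail m c ((i:ℕ)+1)

lemma extSeq_tailsOf (c : Fin (m+1) → ℝ) (hc : IsPV m c) (t : ℕ) :
    extSeq m (tailsOf m c) t = tail m c t := by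
  unfold extSeq
  by_cases h0 : t = 0
  · rw [dif_pos h0, h0, tail_zero, hc.2]
  · rw [dif_neg h0]
    by_cases hm' : t ≤ m
    · rw [dif_pos hm']
      show tail m c ((⟨t-1, by omega⟩ : Fin m) + 1) = tail m c t
      congr 1
      simp only []
      omega
    · rw [dif_neg hm', tail_eq_zero c (by omega)]

lemma Good_tailsOf (c : Fin (m+1) → ℝ) (hc : IsPV m c) : Good m (tailsOf m c) := by
  intro t
  rw [extSeq_tailsOf c hc, extSeq_tailsOf c hc]
  exact ⟨tail_nonneg c hc.1 _, tail_anti c hc.1 (Nat.le_succ t)⟩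

lemma tilde_tailsOf (c : Fin (m+1) → ℝ) (hc : IsPV m c) : tilde m (tailsOf m c) = c := by
  apply eq_of_tail_eq
  intro t
  rw [tail_tilde, extSeq_tailsOf c hc]

lemma tailsOf_le_tailsOf {c c' : Fin (m+1) → ℝ} (h : stLE m c c') (i : Fin m) :
    tailsOf m c i ≤ tailsOf m c' i := h _

end DEaux
end


noncomputable section
namespace DEaux
open Module Finset
variable {m dv dc : ℕ}

lemma IsPV_pcirc {ε : ℝ} (h0 : 0 ≤ ε) (h1 : ε ≤ 1) : IsPV m (pcirc m ε) := by
  constructor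
  · intro k
    unfold pcirc
    have h2 : (0:ℝ) ≤ 1 - ε := by linarith
    positivity
  · unfold pcirc
    rw [Fin.sum_univ_eq_sum_range
      (fun i => (m.choose i : ℝ) * ε^i * (1-ε)^(m-i)) (m+1)]
    calc ∑ i ∈ Finset.range (m+1), (m.choose i : ℝ) * ε^i * (1-ε)^(m-i)
        = ∑ i ∈ Finset.range (m+1), ε^i * (1-ε)^(m-i) * (m.choose i : ℝ) := by
          apply Finset.sum_congr rfl
          intro i _
          ring
      _ = (ε + (1-ε))^m := (add_pow ε (1-ε) m).symm
      _ = 1 := by norm_num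

lemma gFun_eq (x : Fin m → ℝ) : gFun m dc x = tailsOf m (gcirc m dc (tilde m x)) := rfl

lemma fFun_eq (ε : ℝ) (y : Fin m → ℝ) :
    fFun m dv ε y = tailsOf m (fcirc m dv ε (tilde m y)) := rfl

lemma pFun_eq (ε : ℝ) : pFun m ε = tailsOf m (pcirc m ε) := rfl

lemma IsPV_gcirc {x : Fin m → ℝ} (hx : Good m x) : IsPV m (gcirc m dc (tilde m x)) :=
  boxtimesPow_PV _ (IsPV_tilde hx)

lemma Good_gFun {x : Fin m → ℝ} (hx : Good m x) : Good m (gFun m dc x) := by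
  rw [gFun_eq]
  exact Good_tailsOf _ (IsPV_gcirc hx)

lemma tilde_gFun {x : Fin m → ℝ} (hx : Good m x) :
    tilde m (gFun m dc x) = gcirc m dc (tilde m x) := by
  rw [gFun_eq]
  exact tilde_tailsOf _ (IsPV_gcirc hx)

lemma IsPV_fcirc {ε : ℝ} (h0 : 0 ≤ ε) (h1 : ε ≤ 1) {y : Fin m → ℝ} (hy : Good m y) :
    IsPV m (fcirc m dv ε (tilde m y)) := by
  show IsPV m (boxdot m (pcirc m ε) (boxdotPow m (dv-2) (tilde m y)))
  rw [boxdot_eq_opK]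
  exact opK_PV kerOK_V (IsPV_pcirc h0 h1) (boxdotPow_PV _ (IsPV_tilde hy))

lemma Good_T {ε : ℝ} (h0 : 0 ≤ ε) (h1 : ε ≤ 1) {x : Fin m → ℝ} (hx : Good m x) :
    Good m (fFun m dv ε (gFun m dc x)) := by
  rw [fFun_eq]
  exact Good_tailsOf _ (IsPV_fcirc h0 h1 (Good_gFun hx))

lemma T_mono {ε : ℝ} (h0 : 0 ≤ ε) (h1 : ε ≤ 1) {x y : Fin m → ℝ}
    (hx : Good m x) (hy : Good m y) (hxy : ∀ i, x i ≤ y i) (i : Fin m) :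
    fFun m dv ε (gFun m dc x) i ≤ fFun m dv ε (gFun m dc y) i := by
  have s1 : stLE m (tilde m x) (tilde m y) := stLE_tilde hxy
  have s2 : stLE m (gcirc m dc (tilde m x)) (gcirc m dc (tilde m y)) :=
    boxtimesPow_mono _ (IsPV_tilde hx) (IsPV_tilde hy) s1
  have s3 : stLE m (tilde m (gFun m dc x)) (tilde m (gFun m dc y)) := by
    rw [tilde_gFun hx, tilde_gFun hy]
    exact s2
  have s4 := boxdotPow_mono (dv-2) (IsPV_tilde (Good_gFun (dc := dc) hx))
    (IsPV_tilde (Good_gFun (dc := dc) hy)) s3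
  have s5 : stLE m (fcirc m dv ε (tilde m (gFun m dc x)))
      (fcirc m dv ε (tilde m (gFun m dc y))) := by
    show stLE m (boxdot m (pcirc m ε) _) (boxdot m (pcirc m ε) _)
    rw [boxdot_eq_opK, boxdot_eq_opK]
    exact opK_mono kerOK_V (IsPV_pcirc h0 h1) (IsPV_pcirc h0 h1)
      (boxdotPow_PV _ (IsPV_tilde (Good_gFun hx)))
      (boxdotPow_PV _ (IsPV_tilde (Good_gFun hy))) (stLE_refl _) s4
  rw [fFun_eq, fFun_eq]
  exact tailsOf_le_tailsOf s5 i

lemma T_le_p {ε : ℝ} (h0 : 0 ≤ ε) (h1 : ε ≤ 1) {x : Fin m → ℝ} (hx : Good m x) (i : Fin m) :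
    fFun m dv ε (gFun m dc x) i ≤ pFun m ε i := by
  rw [fFun_eq, pFun_eq]
  show tail m (fcirc m dv ε (tilde m (gFun m dc x))) ((i:ℕ)+1)
    ≤ tail m (pcirc m ε) ((i:ℕ)+1)
  exact tail_boxdot_le (boxdotPow_PV _ (IsPV_tilde (Good_gFun hx))) (IsPV_pcirc h0 h1) _

section Cont
variable {X : Type*} [TopologicalSpace X]

lemma cont_extSeq (g : X → Fin m → ℝ) (hg : ∀ i, Continuous (fun x => g x i)) (t : ℕ) :
    Continuous (fun x => extSeq m (g x) t) := by
  unfold extSeq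
  by_cases hh0 : t = 0
  · simp only [dif_pos hh0]
    exact continuous_const
  · simp only [dif_neg hh0]
    by_cases hm' : t ≤ m
    · simp only [dif_pos hm']
      exact hg _
    · simp only [dif_neg hm']
      exact continuous_const

lemma cont_tilde (g : X → Fin m → ℝ) (hg : ∀ i, Continuous (fun x => g x i)) (k : Fin (m+1)) :
    Continuous (fun x => tilde m (g x) k) := by
  unfold tilde
  exact (cont_extSeq g hg _).sub (cont_extSeq g hg _)

lemma cont_opK (K : Fin (m+1) → Fin (m+1) → Fin (m+1) → ℝ) (A B : X → Fin (m+1) → ℝ)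
    (hA : ∀ k, Continuous (fun x => A x k)) (hB : ∀ k, Continuous (fun x => B x k))
    (k : Fin (m+1)) : Continuous (fun x => opK m K (A x) (B x) k) := by
  apply continuous_finset_sum
  intro i _
  apply continuous_finset_sum
  intro j _
  exact (continuous_const.mul (hA i)).mul (hB j)

lemma cont_boxdotPow (n : ℕ) (A : X → Fin (m+1) → ℝ)
    (hA : ∀ k, Continuous (fun x => A x k)) (k : Fin (m+1)) :
    Continuous (fun x => boxdotPow m n (A x) k) := by
  induction n generalizing k with
  | zero => exact hA k
  | succ n ih =>
    show Continuous (fun x => boxdot m (A x) (boxdotPow m n (A x)) k)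
    simp only [boxdot_eq_opK]
    exact cont_opK _ A _ hA ih k

lemma cont_boxtimesPow (n : ℕ) (A : X → Fin (m+1) → ℝ)
    (hA : ∀ k, Continuous (fun x => A x k)) (k : Fin (m+1)) :
    Continuous (fun x => boxtimesPow m n (A x) k) := by
  induction n generalizing k with
  | zero => exact hA k
  | succ n ih =>
    show Continuous (fun x => boxtimes m (A x) (boxtimesPow m n (A x)) k)
    simp only [boxtimes_eq_opK]
    exact cont_opK _ A _ hA ih k

lemma cont_T (ε : ℝ) : Continuous (fun x : Fin m → ℝ => fFun m dv ε (gFun m dc x)) := by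
  have hx : ∀ i : Fin m, Continuous (fun x : Fin m → ℝ => x i) :=
    fun i => continuous_apply i
  have htilde : ∀ k, Continuous (fun x : Fin m → ℝ => tilde m x k) :=
    cont_tilde id hx
  have hgcirc : ∀ k, Continuous (fun x : Fin m → ℝ => gcirc m dc (tilde m x) k) := by
    intro k
    show Continuous (fun x => boxtimesPow m (dc-2) (tilde m x) k)
    exact cont_boxtimesPow _ _ htilde k
  have hgFun : ∀ i, Continuous (fun x : Fin m → ℝ => gFun m dc x i) := by
    intro i
    unfold gFun
    apply continuous_finset_sum
    intro k _
    by_cases h : (i:ℕ)+1 ≤ (k:ℕ)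
    · simp only [if_pos h]
      exact hgcirc k
    · simp only [if_neg h]
      exact continuous_const
  have htg : ∀ k, Continuous (fun x : Fin m → ℝ => tilde m (gFun m dc x) k) :=
    cont_tilde _ hgFun
  have hpow : ∀ k, Continuous
      (fun x : Fin m → ℝ => boxdotPow m (dv-2) (tilde m (gFun m dc x)) k) :=
    cont_boxdotPow _ _ htg
  have hfcirc : ∀ k, Continuous
      (fun x : Fin m → ℝ => fcirc m dv ε (tilde m (gFun m dc x)) k) := by
    intro k
    show Continuous (fun x =>
      boxdot m (pcirc m ε) (boxdotPow m (dv-2) (tilde m (gFun m dc x))) k)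
    simp only [boxdot_eq_opK]
    exact cont_opK _ (fun _ => pcirc m ε) _ (fun _ => continuous_const) hpow k
  apply continuous_pi
  intro i
  unfold fFun
  apply continuous_finset_sum
  intro k _
  by_cases h : (i:ℕ)+1 ≤ (k:ℕ)
  · simp only [if_pos h]
    exact hfcirc k
  · simp only [if_neg h]
    exact continuous_const

end Cont
end DEaux
end

/-- **Corollary to Theorem 1.** The density evolution recursion
`x⁽⁰⁾ = p(ε)`, `x⁽ℓ⁺¹⁾ = f(g(x⁽ℓ⁾); ε)` converges to a fixed point. -/
theorem DE_converges_to_fixed_point (m dv dc : ℕ) (hm : 1 ≤ m) (hdv : 2 ≤ dv) (hdc : 2 ≤ dc)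
    (ε : ℝ) (hε : ε ∈ Set.Icc (0:ℝ) 1)
    (seq : ℕ → (Fin m → ℝ))
    (h0 : seq 0 = pFun m ε)
    (hstep : ∀ ℓ : ℕ, seq (ℓ + 1) = fFun m dv ε (gFun m dc (seq ℓ))) :
    ∃ xinf : Fin m → ℝ, Filter.Tendsto seq Filter.atTop (nhds xinf) ∧
      xinf = fFun m dv ε (gFun m dc xinf) := by
  obtain ⟨hε0, hε1⟩ := hε
  have hPVp : DEaux.IsPV m (pcirc m ε) := DEaux.IsPV_pcirc hε0 hε1
  have hGoodp : DEaux.Good m (pFun m ε) := by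
    rw [DEaux.pFun_eq]
    exact DEaux.Good_tailsOf _ hPVp
  have hGood : ∀ ℓ, DEaux.Good m (seq ℓ) := by
    intro ℓ
    induction ℓ with
    | zero => rw [h0]; exact hGoodp
    | succ ℓ ih => rw [hstep]; exact DEaux.Good_T (dv := dv) (dc := dc) hε0 hε1 ih
  have hdec : ∀ ℓ i, seq (ℓ+1) i ≤ seq ℓ i := by
    intro ℓ
    induction ℓ with
    | zero =>
      intro i
      rw [hstep 0]
      calc fFun m dv ε (gFun m dc (seq 0)) i
          ≤ pFun m ε i := DEaux.T_le_p (dv := dv) (dc := dc) hε0 hε1 (hGood 0) i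
        _ = seq 0 i := by rw [h0]
    | succ ℓ ih =>
      intro i
      rw [hstep (ℓ+1)]
      calc fFun m dv ε (gFun m dc (seq (ℓ+1))) i
          ≤ fFun m dv ε (gFun m dc (seq ℓ)) i :=
            DEaux.T_mono (dv := dv) (dc := dc) hε0 hε1 (hGood (ℓ+1)) (hGood ℓ) ih i
        _ = seq (ℓ+1) i := (congrFun (hstep ℓ) i).symm
  have hanti : ∀ i, Antitone (fun ℓ => seq ℓ i) :=
    fun i => antitone_nat_of_succ_le (fun ℓ => hdec ℓ i)
  have hbdd : ∀ i, BddBelow (Set.range fun ℓ => seq ℓ i) := by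
    intro i
    refine ⟨0, ?_⟩
    rintro y ⟨ℓ, rfl⟩
    have h1 := DEaux.extSeq_nonneg (hGood ℓ) ((i:ℕ)+1)
    rwa [DEaux.extSeq_coord] at h1
  set xinf : Fin m → ℝ := fun i => ⨅ ℓ, seq ℓ i with hxinf
  have htend : Filter.Tendsto seq Filter.atTop (nhds xinf) := by
    rw [tendsto_pi_nhds]
    intro i
    exact tendsto_atTop_ciInf (hanti i) (hbdd i)
  refine ⟨xinf, htend, ?_⟩
  have hcont : Continuous (fun x : Fin m → ℝ => fFun m dv ε (gFun m dc x)) :=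
    DEaux.cont_T (m := m) (dv := dv) (dc := dc) ε
  have h2 : Filter.Tendsto (fun ℓ => seq (ℓ+1)) Filter.atTop
      (nhds (fFun m dv ε (gFun m dc xinf))) := by
    have := (hcont.tendsto xinf).comp htend
    apply Filter.Tendsto.congr _ this
    intro ℓ
    exact (hstep ℓ).symm
  have h3 : Filter.Tendsto (fun ℓ => seq (ℓ+1)) Filter.atTop (nhds xinf) :=
    htend.comp (Filter.tendsto_add_atTop_nat 1)
  exact tendsto_nhds_unique h3 h2

end
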